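/- Let n ≥ 1 be an integer. For every integer k ≥ 0 and every λ ∈ ℝ, the function r ↦ ψ_k^λ(r) is nondecreasing on (0,∞). (This follows since ψ_k^λ(r) also equals (1/2)(Γ((n+1)/2)/(√π Γ(n/2))) (k!(n−1)!/(k+n−1)!) ∫_{−π/2}^{π/2} cosh((1/2)λ r² sinθ) L_k^{n−1}(−2|λ| r² cosθ) e^{|λ| r² cosθ} (cosθ)^{n−1} dθ, and L_k^{n−1}(−t) for t ≥ 0 is a polynomial in t with nonnegative coefficients.) -/
import Mathlib


open MeasureTheory

/-- The Laguerre polynomial of type `n−1`: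
`L_k^{n−1}(x) = Σ_{j=0}^k (−1)^j ((k+n−1)!/((k−j)!(n−1+j)! j!)) x^j`. -/
noncomputable def laguerre (n k : ℕ) (x : ℝ) : ℝ :=
  ∑ j ∈ Finset.range (k + 1),
    (-1 : ℝ) ^ j *
      ((Nat.factorial (k + n - 1) : ℝ) /
        ((Nat.factorial (k - j) : ℝ) * (Nat.factorial (n - 1 + j) : ℝ) *
          (Nat.factorial j : ℝ))) * x ^ j

/-- The function `ψ_k^λ(r)`. -/
noncomputable def psiFun (n k : ℕ) (lam r : ℝ) : ℝ :=
  (Real.Gamma (((n : ℝ) + 1) / 2) / (Real.sqrt Real.pi * Real.Gamma ((n : ℝ) / 2))) *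
    ((Nat.factorial k : ℝ) * (Nat.factorial (n - 1) : ℝ) / (Nat.factorial (k + n - 1) : ℝ)) *
    ∫ θ in Set.Ioo (-(Real.pi / 2)) (Real.pi / 2),
      Real.exp ((1 / 2) * lam * r ^ 2 * Real.sin θ) *
        laguerre n k (-2 * |lam| * r ^ 2 * Real.cos θ) *
        Real.exp (|lam| * r ^ 2 * Real.cos θ) * (Real.cos θ) ^ (n - 1)

lemma laguerre_neg_eq (n k : ℕ) (x : ℝ) :
    laguerre n k (-x) = ∑ j ∈ Finset.range (k + 1),
      ((Nat.factorial (k + n - 1) : ℝ) /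
        ((Nat.factorial (k - j) : ℝ) * (Nat.factorial (n - 1 + j) : ℝ) *
          (Nat.factorial j : ℝ))) * x ^ j := by
  unfold laguerre
  refine Finset.sum_congr rfl fun j _ => ?_
  set c : ℝ := (Nat.factorial (k + n - 1) : ℝ) /
      ((Nat.factorial (k - j) : ℝ) * (Nat.factorial (n - 1 + j) : ℝ) *
        (Nat.factorial j : ℝ))
  calc (-1 : ℝ) ^ j * c * (-x) ^ j = c * ((-1 : ℝ) ^ j * (-x) ^ j) := by ring
    _ = c * ((-1 * -x) ^ j) := by rw [mul_pow]
    _ = c * x ^ j := by norm_num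

lemma laguerre_coeff_nonneg (n k j : ℕ) :
    (0 : ℝ) ≤ (Nat.factorial (k + n - 1) : ℝ) /
      ((Nat.factorial (k - j) : ℝ) * (Nat.factorial (n - 1 + j) : ℝ) *
        (Nat.factorial j : ℝ)) := by
  positivity

lemma laguerre_neg_nonneg (n k : ℕ) {u : ℝ} (hu : 0 ≤ u) :
    0 ≤ laguerre n k (-u) := by
  rw [laguerre_neg_eq]
  refine Finset.sum_nonneg fun j _ => ?_
  exact mul_nonneg (laguerre_coeff_nonneg n k j) (pow_nonneg hu j)

lemma laguerre_neg_mono (n k : ℕ) {u v : ℝ} (hu : 0 ≤ u) (huv : u ≤ v) :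
    laguerre n k (-u) ≤ laguerre n k (-v) := by
  rw [laguerre_neg_eq, laguerre_neg_eq]
  refine Finset.sum_le_sum fun j _ => ?_
  exact mul_le_mul_of_nonneg_left (pow_le_pow_left₀ hu huv j) (laguerre_coeff_nonneg n k j)

/-- The integrand of `psiFun`, as a function of `s = r²`. -/
noncomputable def psiInt (n k : ℕ) (lam s θ : ℝ) : ℝ :=
  Real.exp ((1 / 2) * lam * s * Real.sin θ) *
    laguerre n k (-2 * |lam| * s * Real.cos θ) *
    Real.exp (|lam| * s * Real.cos θ) * (Real.cos θ) ^ (n - 1)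

lemma laguerre_continuous (n k : ℕ) : Continuous fun x => laguerre n k x := by
  unfold laguerre
  exact continuous_finset_sum _ fun j _ => (continuous_const.mul (continuous_pow j))

lemma psiInt_continuous (n k : ℕ) (lam s : ℝ) :
    Continuous fun θ => psiInt n k lam s θ := by
  unfold psiInt
  refine ((Continuous.mul (Continuous.mul ?_ ?_) ?_).mul ?_)
  · fun_prop
  · exact (laguerre_continuous n k).comp (by fun_prop)
  · fun_prop
  · fun_prop

lemma psiInt_integrableOn (n k : ℕ) (lam s : ℝ) :
    IntegrableOn (fun θ => psiInt n k lam s θ)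
      (Set.Ioo (-(Real.pi / 2)) (Real.pi / 2)) := by
  exact ((psiInt_continuous n k lam s).integrableOn_Icc).mono_set Set.Ioo_subset_Icc_self

lemma psiInt_neg_integrableOn (n k : ℕ) (lam s : ℝ) :
    IntegrableOn (fun θ => psiInt n k lam s (-θ))
      (Set.Ioo (-(Real.pi / 2)) (Real.pi / 2)) := by
  exact (((psiInt_continuous n k lam s).comp continuous_neg).integrableOn_Icc).mono_set
    Set.Ioo_subset_Icc_self

lemma integral_comp_neg_Ioo (f : ℝ → ℝ) (a : ℝ) (ha : 0 ≤ a) :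
    ∫ θ in Set.Ioo (-a) a, f (-θ) = ∫ θ in Set.Ioo (-a) a, f θ := by
  have h1 : -a ≤ a := by linarith
  rw [← integral_Ioc_eq_integral_Ioo, ← integral_Ioc_eq_integral_Ioo,
    ← intervalIntegral.integral_of_le h1, ← intervalIntegral.integral_of_le h1]
  simpa using intervalIntegral.integral_comp_neg f (a := -a) (b := a)

lemma psiInt_pair (n k : ℕ) (lam s θ : ℝ) :
    psiInt n k lam s θ + psiInt n k lam s (-θ) =
      2 * Real.cosh ((1 / 2) * lam * s * Real.sin θ) *
        (laguerre n k (-2 * |lam| * s * Real.cos θ) *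
          Real.exp (|lam| * s * Real.cos θ) * (Real.cos θ) ^ (n - 1)) := by
  unfold psiInt
  rw [Real.sin_neg, Real.cos_neg, Real.cosh_eq]
  have : (1 / 2) * lam * s * (-Real.sin θ) = -((1 / 2) * lam * s * Real.sin θ) := by ring
  rw [this]
  ring

/-- `r ↦ ψ_k^λ(r)` is nondecreasing on `(0,∞)`. -/
theorem stmt_12 (n : ℕ) (hn : 1 ≤ n) (k : ℕ) (lam : ℝ) :
    MonotoneOn (fun r => psiFun n k lam r) (Set.Ioi (0 : ℝ)) := by
  have hpi : (0 : ℝ) ≤ Real.pi / 2 := by positivity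
  set a : ℝ := Real.pi / 2 with ha
  set I : ℝ → ℝ := fun s => ∫ θ in Set.Ioo (-a) a, psiInt n k lam s θ with hI
  -- monotonicity of the integral in s
  have hmono : ∀ s₁ s₂ : ℝ, 0 ≤ s₁ → s₁ ≤ s₂ → I s₁ ≤ I s₂ := by
    intro s₁ s₂ hs₁ hs
    have key : ∀ s, I s = (1 / 2) *
        ∫ θ in Set.Ioo (-a) a, (psiInt n k lam s θ + psiInt n k lam s (-θ)) := by
      intro s
      have h2 : (∫ θ in Set.Ioo (-a) a, (psiInt n k lam s θ + psiInt n k lam s (-θ)))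
          = I s + I s := by
        rw [integral_add (psiInt_integrableOn n k lam s) (psiInt_neg_integrableOn n k lam s),
          integral_comp_neg_Ioo (fun θ => psiInt n k lam s θ) a hpi]
      rw [h2]; ring
    rw [key s₁, key s₂]
    refine mul_le_mul_of_nonneg_left ?_ (by norm_num)
    refine setIntegral_mono_on
      ((psiInt_integrableOn n k lam s₁).add (psiInt_neg_integrableOn n k lam s₁))
      ((psiInt_integrableOn n k lam s₂).add (psiInt_neg_integrableOn n k lam s₂))
      measurableSet_Ioo ?_
    intro θ hθ
    have hcos : 0 < Real.cos θ := Real.cos_pos_of_mem_Ioo hθ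
    rw [psiInt_pair, psiInt_pair]
    have habs : |(1 / 2) * lam * s₁ * Real.sin θ| ≤ |(1 / 2) * lam * s₂ * Real.sin θ| := by
      have h1 : (1 / 2) * lam * s₁ * Real.sin θ = ((1 / 2) * lam * Real.sin θ) * s₁ := by ring
      have h2 : (1 / 2) * lam * s₂ * Real.sin θ = ((1 / 2) * lam * Real.sin θ) * s₂ := by ring
      have e1 : |(1 / 2) * lam * Real.sin θ * s₁| = |(1 / 2) * lam * Real.sin θ| * s₁ := by
        rw [abs_mul, abs_of_nonneg hs₁]
      have e2 : |(1 / 2) * lam * Real.sin θ * s₂| = |(1 / 2) * lam * Real.sin θ| * s₂ := by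
        rw [abs_mul, abs_of_nonneg (hs₁.trans hs)]
      rw [h1, h2, e1, e2]
      exact mul_le_mul_of_nonneg_left hs (abs_nonneg _)
    have hcosh : Real.cosh ((1 / 2) * lam * s₁ * Real.sin θ) ≤
        Real.cosh ((1 / 2) * lam * s₂ * Real.sin θ) := Real.cosh_le_cosh.2 habs
    have hcosh0 : 0 ≤ 2 * Real.cosh ((1 / 2) * lam * s₂ * Real.sin θ) := by
      have := Real.cosh_pos ((1 / 2) * lam * s₂ * Real.sin θ); linarith
    have hlarg1 : -2 * |lam| * s₁ * Real.cos θ = -(2 * |lam| * s₁ * Real.cos θ) := by ring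
    have hlarg2 : -2 * |lam| * s₂ * Real.cos θ = -(2 * |lam| * s₂ * Real.cos θ) := by ring
    have hu1 : (0:ℝ) ≤ 2 * |lam| * s₁ * Real.cos θ :=
      mul_nonneg (mul_nonneg (mul_nonneg (by norm_num) (abs_nonneg _)) hs₁) hcos.le
    have hu2 : (0:ℝ) ≤ 2 * |lam| * s₂ * Real.cos θ :=
      mul_nonneg (mul_nonneg (mul_nonneg (by norm_num) (abs_nonneg _)) (hs₁.trans hs)) hcos.le
    have huv : 2 * |lam| * s₁ * Real.cos θ ≤ 2 * |lam| * s₂ * Real.cos θ := by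
      have h0 : (0:ℝ) ≤ 2 * |lam| * Real.cos θ :=
        mul_nonneg (mul_nonneg (by norm_num) (abs_nonneg _)) hcos.le
      nlinarith
    have hL : laguerre n k (-2 * |lam| * s₁ * Real.cos θ) ≤
        laguerre n k (-2 * |lam| * s₂ * Real.cos θ) := by
      rw [hlarg1, hlarg2]; exact laguerre_neg_mono n k hu1 huv
    have hL01 : 0 ≤ laguerre n k (-2 * |lam| * s₁ * Real.cos θ) := by
      rw [hlarg1]; exact laguerre_neg_nonneg n k hu1
    have hL02 : 0 ≤ laguerre n k (-2 * |lam| * s₂ * Real.cos θ) := by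
      rw [hlarg2]; exact laguerre_neg_nonneg n k hu2
    have hE : Real.exp (|lam| * s₁ * Real.cos θ) ≤ Real.exp (|lam| * s₂ * Real.cos θ) := by
      apply Real.exp_le_exp.2
      have h0 : (0:ℝ) ≤ |lam| * Real.cos θ := mul_nonneg (abs_nonneg _) hcos.le
      nlinarith
    have hE0 : (0:ℝ) ≤ Real.exp (|lam| * s₁ * Real.cos θ) := (Real.exp_pos _).le
    have hP0 : (0:ℝ) ≤ (Real.cos θ) ^ (n - 1) := pow_nonneg hcos.le _
    refine mul_le_mul (by linarith) ?_ ?_ hcosh0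
    · exact mul_le_mul_of_nonneg_right (mul_le_mul hL hE hE0 hL02) hP0
    · exact mul_nonneg (mul_nonneg hL01 hE0) hP0
  -- conclude
  intro r₁ hr₁ r₂ _ hle
  have hr₁0 : (0:ℝ) ≤ r₁ := (le_of_lt hr₁)
  have hn' : (1:ℝ) ≤ (n:ℝ) := by exact_mod_cast hn
  have hG1 : 0 < Real.Gamma (((n : ℝ) + 1) / 2) := Real.Gamma_pos_of_pos (by linarith)
  have hG2 : 0 < Real.Gamma ((n : ℝ) / 2) := Real.Gamma_pos_of_pos (by linarith)
  set C : ℝ := (Real.Gamma (((n : ℝ) + 1) / 2) / (Real.sqrt Real.pi * Real.Gamma ((n : ℝ) / 2))) *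
    ((Nat.factorial k : ℝ) * (Nat.factorial (n - 1) : ℝ) / (Nat.factorial (k + n - 1) : ℝ))
    with hCdef
  have hC : 0 ≤ C := by
    refine mul_nonneg (div_nonneg hG1.le (mul_nonneg (Real.sqrt_nonneg _) hG2.le)) ?_
    positivity
  have hform : ∀ r : ℝ, psiFun n k lam r = C * I (r ^ 2) := fun r => rfl
  simp only [hform]
  exact mul_le_mul_of_nonneg_left
    (hmono _ _ (sq_nonneg r₁) (pow_le_pow_left₀ hr₁0 hle 2)) hC
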